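/- Let t : X′ → X be a trivial fibration in a category of fibrant objects and s a section of t. Then forming the factorization X′ → P → X′ × X′ of the canonical map X′ → X′ ×_X X′ → X′ × X′ (weak equivalence followed by fibration) yields a path space object for X′, with respect to which the map s∘t × id : X′ → X′ × X′ factors through X′ ×_X X′ and hence lifts to a homotopy from s∘t to id. -/

import Mathlib

open CategoryTheory Limits

universe u v

/-- A category of fibrant objects in the sense of K. Brown: distinguished classes of
fibrations and weak equivalences, satisfying Brown's axioms (2-out-of-3, closure under
composition, every object fibrant, base change of (trivial) fibrations, existence of
path space objects and of factorizations). -/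
structure BrownCFO (C : Type u) [Category.{v} C] [HasTerminal C] [HasBinaryProducts C] where
  /-- the class of fibrations -/
  Fib : ∀ {X Y : C}, (X ⟶ Y) → Prop
  /-- the class of weak equivalences -/
  Weq : ∀ {X Y : C}, (X ⟶ Y) → Prop
  weq_id : ∀ X : C, Weq (𝟙 X)
  weq_of_comp_left : ∀ {X Y Z : C} (f : X ⟶ Y) (g : Y ⟶ Z), Weq f → Weq (f ≫ g) → Weq g
  weq_of_comp_right : ∀ {X Y Z : C} (f : X ⟶ Y) (g : Y ⟶ Z), Weq g → Weq (f ≫ g) → Weq f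
  weq_comp : ∀ {X Y Z : C} (f : X ⟶ Y) (g : Y ⟶ Z), Weq f → Weq g → Weq (f ≫ g)
  fib_id : ∀ X : C, Fib (𝟙 X)
  fib_comp : ∀ {X Y Z : C} (f : X ⟶ Y) (g : Y ⟶ Z), Fib f → Fib g → Fib (f ≫ g)
  /-- every object is fibrant -/
  fib_terminal : ∀ X : C, Fib (terminal.from X)
  /-- pullbacks along fibrations exist -/
  hasPullback_of_fib : ∀ {X Y Z : C} (f : X ⟶ Z) (g : Y ⟶ Z), Fib g → HasPullback f g
  /-- fibrations are stable under base change -/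
  fib_stable : ∀ {X Y Z : C} (f : X ⟶ Z) (g : Y ⟶ Z), Fib g →
    ∀ [HasPullback f g], Fib (pullback.fst f g)
  /-- trivial fibrations are stable under base change -/
  trivFib_stable : ∀ {X Y Z : C} (f : X ⟶ Z) (g : Y ⟶ Z), Fib g → Weq g →
    ∀ [HasPullback f g], Weq (pullback.fst f g)
  /-- existence of path space objects -/
  pathObj : ∀ Y : C, ∃ (P : C) (ι : Y ⟶ P) (e : P ⟶ Y ⨯ Y),
    Weq ι ∧ Fib e ∧ ι ≫ e = prod.lift (𝟙 Y) (𝟙 Y)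
  /-- every morphism factors as a weak equivalence followed by a fibration -/
  factor : ∀ {X Y : C} (f : X ⟶ Y), ∃ (Z : C) (w : X ⟶ Z) (p : Z ⟶ Y),
    Weq w ∧ Fib p ∧ w ≫ p = f

/-- Two morphisms `f g : X ⟶ Y` are homotopic if there is a path space object `P` for `Y`
and a morphism `h : X ⟶ P` whose compositions with the two evaluation maps are `f`
and `g`. -/
def BrownCFO.Homotopic {C : Type u} [Category.{v} C] [HasTerminal C] [HasBinaryProducts C]
    (S : BrownCFO C) {X Y : C} (f g : X ⟶ Y) : Prop :=
  ∃ (P : C) (ι : Y ⟶ P) (e : P ⟶ Y ⨯ Y),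
    S.Weq ι ∧ S.Fib e ∧ ι ≫ e = prod.lift (𝟙 Y) (𝟙 Y) ∧
    ∃ h : X ⟶ P, h ≫ e ≫ prod.fst = f ∧ h ≫ e ≫ prod.snd = g

/-- Let `t : X′ → X` be a trivial fibration with section `s`. Factoring the canonical map
`X′ ×_X X′ → X′ × X′` as a weak equivalence `w` followed by a fibration `p` yields a path
space object for `X′` (with weak equivalence the composite of the diagonal
`X′ → X′ ×_X X′` with `w`), and the map `(s∘t, id) : X′ → X′ × X′` factors through
`X′ ×_X X′`, hence lifts along `w` to a homotopy from `s∘t` to `id_{X′}`. -/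
theorem stmt_19 {C : Type u} [Category.{v} C] [HasTerminal C] [HasBinaryProducts C]
    (S : BrownCFO C) {X' X : C} (t : X' ⟶ X) (ht_fib : S.Fib t) (ht_weq : S.Weq t)
    (s : X ⟶ X') (hs : s ≫ t = 𝟙 X) [HasPullback t t] :
    ∃ (P : C) (w : pullback t t ⟶ P) (p : P ⟶ X' ⨯ X'),
      S.Weq w ∧ S.Fib p ∧
      -- `w` followed by `p` is the canonical map `X′ ×_X X′ → X′ × X′`
      w ≫ p = prod.lift (pullback.fst t t) (pullback.snd t t) ∧
      -- the diagonal composed with `w` makes `P` a path space object for `X′`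
      S.Weq (pullback.lift (𝟙 X') (𝟙 X') rfl ≫ w) ∧
      (pullback.lift (𝟙 X') (𝟙 X') rfl ≫ w) ≫ p = prod.lift (𝟙 X') (𝟙 X') ∧
      -- the lift of `(s∘t, id)` along `w` is a homotopy from `s∘t` to the identity
      (pullback.lift (t ≫ s) (𝟙 X') (by simp [Category.assoc, hs]) ≫ w) ≫ p ≫ prod.fst
          = t ≫ s ∧
      (pullback.lift (t ≫ s) (𝟙 X') (by simp [Category.assoc, hs]) ≫ w) ≫ p ≫ prod.snd
          = 𝟙 X' := by
  obtain ⟨P, w, p, hw, hp, hwp⟩ := S.factor (prod.lift (pullback.fst t t) (pullback.snd t t))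
  have hfst : S.Weq (pullback.fst t t) := S.trivFib_stable t t ht_fib ht_weq
  have hdiag : S.Weq (pullback.lift (𝟙 X') (𝟙 X') rfl : X' ⟶ pullback t t) := by
    apply S.weq_of_comp_right _ (pullback.fst t t) hfst
    rw [pullback.lift_fst]
    exact S.weq_id X'
  refine ⟨P, w, p, hw, hp, hwp, S.weq_comp _ _ hdiag hw, ?_, ?_, ?_⟩ <;>
    · slice_lhs 2 3 => rw [hwp]
      simp only [prod.comp_lift, prod.lift_fst, prod.lift_snd, pullback.lift_fst, pullback.lift_snd]
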